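/- arXiv:2211.08205 — 2 statements merged into one kernel-verified Lean document; each statement's English description precedes it below -/
import Mathlib

section
/- Let ε ~ N(0,1) and ρ(z) = -(f(z)^α - 1)/α with f the standard Gaussian density and α > 0. Then l(x) = E[ρ(ε + x) - ρ(ε)] = (1/α)(1+α)^{-1/2}(2π)^{-α/2}(1 - exp(-α x²/(2(1+α)))), which satisfies l(0) = 0 and l(x) > 0 for all x ≠ 0. -/
open Real Filter MeasureTheory ProbabilityTheory

/-- The standard Gaussian density. -/
noncomputable def gaussDensity (z : ℝ) : ℝ :=
  (Real.sqrt (2 * Real.pi))⁻¹ * Real.exp (-z ^ 2 / 2)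

/-- The robust loss ρ_α(z) = -((f(z)^α - 1)/α). -/
noncomputable def rhoα (α : ℝ) (z : ℝ) : ℝ := -((gaussDensity z ^ α - 1) / α)

lemma gaussPow (α z : ℝ) :
    gaussDensity z ^ α = (2 * Real.pi) ^ (-α / 2) * Real.exp (-(α * z ^ 2) / 2) := by
  have hπ : (0:ℝ) < 2 * Real.pi := by positivity
  unfold gaussDensity
  rw [Real.mul_rpow (by positivity) (Real.exp_pos _).le]
  congr 1
  · rw [Real.sqrt_eq_rpow, ← Real.rpow_neg hπ.le, ← Real.rpow_mul hπ.le]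
    congr 1
    ring
  · rw [← Real.exp_mul]
    congr 1
    ring

lemma keyIntegral (α : ℝ) (hα : 0 < α) (x : ℝ) :
    ∫ z : ℝ, gaussianPDFReal 0 1 z * gaussDensity (z + x) ^ α
      = (1 + α) ^ (-(1:ℝ) / 2) * (2 * Real.pi) ^ (-α / 2) *
        Real.exp (-(α * x ^ 2) / (2 * (1 + α))) := by
  have h1α : (0:ℝ) < 1 + α := by linarith
  have hπ : (0:ℝ) < 2 * Real.pi := by positivity
  set b : ℝ := (1 + α) / 2 with hb
  set c : ℝ := α * x / (1 + α) with hc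
  have hbpos : 0 < b := by positivity
  have hpt : ∀ z : ℝ, gaussianPDFReal 0 1 z * gaussDensity (z + x) ^ α
      = ((Real.sqrt (2 * Real.pi))⁻¹ * (2 * Real.pi) ^ (-α / 2) *
          Real.exp (-(α * x ^ 2) / (2 * (1 + α)))) * Real.exp (-b * (z + c) ^ 2) := by
    intro z
    rw [gaussPow]
    simp only [gaussianPDFReal, NNReal.coe_one, mul_one, sub_zero]
    have hexp : Real.exp (-z ^ 2 / 2) * Real.exp (-(α * (z + x) ^ 2) / 2)
        = Real.exp (-(α * x ^ 2) / (2 * (1 + α))) * Real.exp (-b * (z + c) ^ 2) := by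
      rw [← Real.exp_add, ← Real.exp_add]
      congr 1
      rw [hb, hc]
      field_simp
      ring
    linear_combination ((Real.sqrt (2 * Real.pi))⁻¹ * (2 * Real.pi) ^ (-α / 2)) * hexp
  simp_rw [hpt]
  rw [integral_const_mul _ _]
  rw [MeasureTheory.integral_add_right_eq_self (fun z => Real.exp (-b * z ^ 2)) c]
  rw [integral_gaussian]
  have hsq : Real.sqrt (Real.pi / b) = Real.sqrt (2 * Real.pi) / Real.sqrt (1 + α) := by
    rw [← Real.sqrt_div (by positivity)]
    congr 1
    rw [hb]
    field_simp
  rw [hsq]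
  have hne : Real.sqrt (2 * Real.pi) ≠ 0 := by positivity
  have h1 : (1 + α) ^ (-(1:ℝ) / 2) = (Real.sqrt (1 + α))⁻¹ := by
    rw [Real.sqrt_eq_rpow, ← Real.rpow_neg h1α.le]
    norm_num
  rw [h1]
  field_simp

theorem stmt5 (α : ℝ) (hα : 0 < α) :
    let l : ℝ → ℝ := fun x => ∫ z, (rhoα α (z + x) - rhoα α z) ∂(gaussianReal 0 1)
    (∀ x : ℝ, l x = (1 / α) * (1 + α) ^ (-(1 : ℝ) / 2) * (2 * Real.pi) ^ (-α / 2) *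
        (1 - Real.exp (-(α * x ^ 2) / (2 * (1 + α))))) ∧
    l 0 = 0 ∧ ∀ x : ℝ, x ≠ 0 → 0 < l x := by
  intro l
  have h1α : (0:ℝ) < 1 + α := by linarith
  have hπ : (0:ℝ) < 2 * Real.pi := by positivity
  -- conversion of gaussian integrals to Lebesgue integrals
  have hμ : gaussianReal 0 1
      = volume.withDensity (fun z => ((gaussianPDFReal 0 1 z).toNNReal : ENNReal)) := by
    rw [gaussianReal_of_var_ne_zero 0 one_ne_zero]
    rfl
  have hconv : ∀ f : ℝ → ℝ, ∫ z, f z ∂(gaussianReal 0 1)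
      = ∫ z, gaussianPDFReal 0 1 z * f z := by
    intro f
    rw [hμ, integral_withDensity_eq_integral_smul
      ((measurable_gaussianPDFReal 0 1).real_toNNReal) f]
    congr 1
    funext z
    rw [NNReal.smul_def, smul_eq_mul, Real.coe_toNNReal _ (gaussianPDFReal_nonneg 0 1 z)]
  -- integrability of z ↦ gaussDensity (z + x) ^ α wrt the gaussian measure
  have hint : ∀ x : ℝ, Integrable (fun z => gaussDensity (z + x) ^ α) (gaussianReal 0 1) := by
    intro x
    have hcont : Continuous (fun z => gaussDensity (z + x) ^ α) := by
      simp only [gaussPow]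
      fun_prop
    refine (integrable_const ((2 * Real.pi) ^ (-α / 2) : ℝ)).mono'
      hcont.aestronglyMeasurable ?_
    filter_upwards with z
    rw [Real.norm_eq_abs, gaussPow, abs_of_nonneg (by positivity)]
    have h1 : Real.exp (-(α * (z + x) ^ 2) / 2) ≤ 1 := by
      rw [Real.exp_le_one_iff]
      have : 0 ≤ α * (z + x) ^ 2 := by positivity
      linarith
    have h2 : (0:ℝ) ≤ (2 * Real.pi) ^ (-α / 2) := by positivity
    nlinarith
  -- closed form
  have hl : ∀ x : ℝ, l x = (1 / α) * (1 + α) ^ (-(1 : ℝ) / 2) * (2 * Real.pi) ^ (-α / 2) *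
      (1 - Real.exp (-(α * x ^ 2) / (2 * (1 + α)))) := by
    intro x
    have hpt : ∀ z : ℝ, rhoα α (z + x) - rhoα α z
        = (1 / α) * (gaussDensity z ^ α - gaussDensity (z + x) ^ α) := by
      intro z
      unfold rhoα
      field_simp
      ring
    have : l x = ∫ z, (1 / α) * (gaussDensity z ^ α - gaussDensity (z + x) ^ α)
        ∂(gaussianReal 0 1) := by
      simp only [l]
      exact integral_congr_ae (Filter.Eventually.of_forall hpt)
    rw [this, integral_const_mul _ _]
    have hint0 : Integrable (fun z => gaussDensity z ^ α) (gaussianReal 0 1) := by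
      have := hint 0
      simpa using this
    rw [integral_sub hint0 (hint x)]
    rw [hconv, hconv]
    have hzero : ∫ z, gaussianPDFReal 0 1 z * gaussDensity z ^ α
        = (1 + α) ^ (-(1:ℝ) / 2) * (2 * Real.pi) ^ (-α / 2) := by
      have := keyIntegral α hα 0
      simp only [add_zero] at this
      rw [this]
      norm_num
    rw [hzero, keyIntegral α hα x]
    ring
  refine ⟨hl, ?_, ?_⟩
  · rw [hl 0]
    norm_num
  · intro x hx
    rw [hl x]
    have hx2 : (0:ℝ) < x ^ 2 := by positivity
    have hexp : Real.exp (-(α * x ^ 2) / (2 * (1 + α))) < 1 := by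
      rw [Real.exp_lt_one_iff]
      have h1 : 0 < α * x ^ 2 := by positivity
      have h2 : 0 < 2 * (1 + α) := by linarith
      exact div_neg_of_neg_of_pos (by linarith) h2
    have hC : 0 < (1 / α) * (1 + α) ^ (-(1 : ℝ) / 2) * (2 * Real.pi) ^ (-α / 2) := by
      positivity
    nlinarith
end

section
/- Let f be the standard Gaussian density and α > 0. Then η ↦ E_{Z~N(0,1)}[ρ_α(Z + m)] with ρ_α(z) = -(f(z)^α - 1)/α is uniquely minimized over m ∈ ℝ at m = 0 (Fisher consistency of the location M-estimator based on ρ_α). -/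
open Real MeasureTheory ProbabilityTheory
open scoped NNReal ENNReal

lemma gaussDensity_eq : gaussDensity = gaussianPDFReal 0 1 := by
  ext x
  simp [gaussDensity, gaussianPDFReal]

lemma gaussDensity_pos (z : ℝ) : 0 < gaussDensity z := by
  unfold gaussDensity; positivity

lemma gaussDensity_le (z : ℝ) : gaussDensity z ≤ (Real.sqrt (2 * Real.pi))⁻¹ := by
  unfold gaussDensity
  nlinarith [Real.exp_le_one_iff.mpr (by nlinarith [sq_nonneg z] : -z ^ 2 / 2 ≤ 0),
    Real.exp_pos (-z ^ 2 / 2), Real.sqrt_pos.mpr (by positivity : (0:ℝ) < 2 * Real.pi),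
    inv_pos.mpr (Real.sqrt_pos.mpr (by positivity : (0:ℝ) < 2 * Real.pi))]

lemma exp_rpow' (a b : ℝ) : (rexp a) ^ b = rexp (a * b) := by
  rw [Real.rpow_def_of_pos (Real.exp_pos a), Real.log_exp]

lemma integral_gauss (g : ℝ → ℝ) :
    ∫ z, g z ∂(gaussianReal 0 1) = ∫ z, gaussDensity z * g z := by
  rw [gaussianReal_of_var_ne_zero 0 one_ne_zero]
  have h : (gaussianPDF 0 1) = fun x => ((Real.toNNReal (gaussianPDFReal 0 1 x) : ℝ≥0) : ℝ≥0∞) :=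
    rfl
  rw [h, integral_withDensity_eq_integral_smul
      ((measurable_gaussianPDFReal 0 1).real_toNNReal) g]
  congr 1
  ext x
  rw [NNReal.smul_def, Real.coe_toNNReal _ (gaussianPDFReal_nonneg 0 1 x), smul_eq_mul, gaussDensity_eq]

lemma integrand_eq (α : ℝ) (hα : 0 < α) (m z : ℝ) :
    gaussDensity z * gaussDensity (z + m) ^ α =
      ((Real.sqrt (2 * π))⁻¹ * ((Real.sqrt (2 * π))⁻¹) ^ α
        * rexp (-(α * m ^ 2) / (2 * (1 + α))))
      * rexp (-((1 + α) / 2) * (z + α * m / (1 + α)) ^ 2) := by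
  have h1α : (1 : ℝ) + α ≠ 0 := by positivity
  unfold gaussDensity
  rw [Real.mul_rpow (by positivity) (Real.exp_pos _).le, exp_rpow']
  rw [show ((Real.sqrt (2*π))⁻¹ * rexp (-z^2/2)) * (((Real.sqrt (2*π))⁻¹)^α
      * rexp (-(z+m)^2/2 * α)) = ((Real.sqrt (2*π))⁻¹ * ((Real.sqrt (2*π))⁻¹)^α)
      * (rexp (-z^2/2) * rexp (-(z+m)^2/2 * α)) by ring, ← Real.exp_add]
  rw [show (-z^2/2 + -(z+m)^2/2 * α) = (-(α * m ^ 2) / (2 * (1 + α)))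
      + (-((1 + α) / 2) * (z + α * m / (1 + α)) ^ 2) by field_simp; ring]
  rw [Real.exp_add]
  ring

lemma J_eq (α : ℝ) (hα : 0 < α) (m : ℝ) :
    ∫ z, gaussDensity z * gaussDensity (z + m) ^ α =
      ((Real.sqrt (2 * π))⁻¹ * ((Real.sqrt (2 * π))⁻¹) ^ α * Real.sqrt (π / ((1 + α) / 2)))
        * rexp (-(α * m ^ 2) / (2 * (1 + α))) := by
  simp_rw [integrand_eq α hα m]
  rw [integral_const_mul]
  rw [integral_add_right_eq_self (fun z => rexp (-((1 + α) / 2) * z ^ 2)) (α * m / (1 + α))]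
  rw [integral_gaussian]
  ring

lemma integrable_gaussDensity : Integrable gaussDensity := by
  rw [gaussDensity_eq]; exact integrable_gaussianPDFReal 0 1

lemma integrable_J (α : ℝ) (hα : 0 < α) (m : ℝ) :
    Integrable (fun z => gaussDensity z * gaussDensity (z + m) ^ α) := by
  have hc : Continuous fun z => gaussDensity (z + m) := by
    unfold gaussDensity; fun_prop
  have h := Integrable.bdd_mul integrable_gaussDensity
    ((hc.rpow_const (fun x => Or.inr hα.le)).aestronglyMeasurable)
    (c := ((Real.sqrt (2 * π))⁻¹) ^ α) (ae_of_all _ fun z => ?_)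
  · exact h.congr (ae_of_all _ fun z => by ring)
  · rw [Real.norm_eq_abs, abs_of_nonneg (Real.rpow_nonneg (gaussDensity_pos _).le _)]
    exact Real.rpow_le_rpow (gaussDensity_pos _).le (gaussDensity_le _) hα.le

lemma expected_loss (α : ℝ) (hα : 0 < α) (m : ℝ) :
    ∫ z, gaussDensity z * rhoα α (z + m) =
      1 / α - (∫ z, gaussDensity z * gaussDensity (z + m) ^ α) / α := by
  have h1 : Integrable (fun z => gaussDensity z * (1 / α)) :=
    integrable_gaussDensity.mul_const _
  have h2 := (integrable_J α hα m).div_const α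
  have heq : (fun z => gaussDensity z * rhoα α (z + m)) =
      fun z => gaussDensity z * (1 / α) - (gaussDensity z * gaussDensity (z + m) ^ α) / α := by
    ext z; unfold rhoα; field_simp; ring
  rw [heq, integral_sub h1 h2, integral_mul_const, integral_div]
  rw [gaussDensity_eq, integral_gaussianPDFReal_eq_one 0 one_ne_zero]
  ring

/-- Fisher consistency of the location M-estimator based on ρ_α: the expected loss
m ↦ E[ρ_α(Z + m)] under Z ~ N(0,1) is uniquely minimized at m = 0. -/
theorem stmt19 (α : ℝ) (hα : 0 < α) :
    ∀ m : ℝ, m ≠ 0 →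
      (∫ z, rhoα α (z + 0) ∂(gaussianReal 0 1)) <
        ∫ z, rhoα α (z + m) ∂(gaussianReal 0 1) := by
  intro m hm
  rw [integral_gauss, integral_gauss, expected_loss α hα, expected_loss α hα]
  have hJ : (∫ z, gaussDensity z * gaussDensity (z + m) ^ α) <
      ∫ z, gaussDensity z * gaussDensity (z + 0) ^ α := by
    rw [J_eq α hα, J_eq α hα]
    have hK : 0 < (Real.sqrt (2 * π))⁻¹ * ((Real.sqrt (2 * π))⁻¹) ^ α
        * Real.sqrt (π / ((1 + α) / 2)) := by
      have h2π : (0:ℝ) < Real.sqrt (2 * π) := Real.sqrt_pos.mpr (by positivity)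
      have := Real.sqrt_pos.mpr (show (0:ℝ) < π / ((1 + α) / 2) by positivity)
      have := Real.rpow_pos_of_pos (inv_pos.mpr h2π) α
      positivity
    have he : rexp (-(α * m ^ 2) / (2 * (1 + α))) < rexp (-(α * 0 ^ 2) / (2 * (1 + α))) := by
      apply Real.exp_lt_exp.mpr
      have hm2 : 0 < m ^ 2 := by positivity
      have h1α : (0:ℝ) < 2 * (1 + α) := by positivity
      rw [div_lt_div_iff_of_pos_right h1α]
      nlinarith
    exact mul_lt_mul_of_pos_left he hK
  have h' : (∫ z, gaussDensity z * gaussDensity (z + m) ^ α) / α <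
      (∫ z, gaussDensity z * gaussDensity (z + 0) ^ α) / α := by gcongr
  linarith
end
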